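/- Let S be a contraction on a Hilbert space K and for 0 < t < 1 set X_t = (1−t)(I − tS)⁻¹. Then X_t is a contraction, i.e. ‖X_t‖ ≤ 1; equivalently I − X_t X_t* ≥ 0. -/

import Mathlib

open ContinuousLinearMap

/-- If `S` is a contraction on a Hilbert space `K` and `0 < t < 1`, then
`X_t = (1 − t)(I − t S)⁻¹` is a contraction: `‖X_t‖ ≤ 1`. -/
theorem contraction_resolvent_contraction
    {K : Type*} [NormedAddCommGroup K] [InnerProductSpace ℂ K] [CompleteSpace K]
    (S : K →L[ℂ] K) (hS : ‖S‖ ≤ 1) (t : ℝ) (ht0 : 0 < t) (ht1 : t < 1) :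
    ‖((1 - t : ℝ) • Ring.inverse ((1 : K →L[ℂ] K) - (t : ℝ) • S) : K →L[ℂ] K)‖ ≤ 1 := by
  set x : K →L[ℂ] K := (t : ℝ) • S with hx
  have hxn : ‖x‖ ≤ t * ‖S‖ := by
    rw [hx]
    calc ‖(t : ℝ) • S‖ ≤ ‖(t:ℝ)‖ * ‖S‖ := norm_smul_le _ _
    _ = t * ‖S‖ := by rw [Real.norm_of_nonneg ht0.le]
  have hxlt : ‖x‖ < 1 := lt_of_le_of_lt (hxn.trans (by nlinarith)) ht1
  have hinv : ‖Ring.inverse ((1 : K →L[ℂ] K) - x)‖ ≤ (1 - ‖x‖)⁻¹ := by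
    rw [NormedRing.inverse_one_sub x hxlt]
    have h1 : ((Units.oneSub x hxlt)⁻¹ : (K →L[ℂ] K)ˣ) = (∑' n : ℕ, x ^ n : K →L[ℂ] K) := rfl
    rw [h1]
    have hb' : ∀ n : ℕ, ‖x ^ n‖ ≤ ‖x‖ ^ n := by
      intro n
      cases n with
      | zero => simpa using (show ‖(1 : K →L[ℂ] K)‖ ≤ 1 from norm_id_le)
      | succ m => exact norm_pow_le' x m.succ_ne_zero.bot_lt
    have hs : Summable fun n : ℕ => ‖x‖ ^ n := summable_geometric_of_lt_one (norm_nonneg x) hxlt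
    calc ‖(∑' n : ℕ, x ^ n : K →L[ℂ] K)‖ ≤ ∑' n : ℕ, ‖x‖ ^ n :=
          tsum_of_norm_bounded hs.hasSum hb'
      _ = (1 - ‖x‖)⁻¹ := tsum_geometric_of_lt_one (norm_nonneg x) hxlt
  have h1x : (0:ℝ) < 1 - ‖x‖ := by linarith
  calc ‖((1 - t : ℝ) • Ring.inverse ((1 : K →L[ℂ] K) - x) : K →L[ℂ] K)‖
      ≤ ‖(1 - t : ℝ)‖ * ‖Ring.inverse ((1 : K →L[ℂ] K) - x)‖ := norm_smul_le _ _
    _ = (1 - t) * ‖Ring.inverse ((1 : K →L[ℂ] K) - x)‖ := by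
        rw [Real.norm_of_nonneg (by linarith)]
    _ ≤ (1 - t) * (1 - ‖x‖)⁻¹ := by
        apply mul_le_mul_of_nonneg_left hinv (by linarith)
    _ ≤ 1 := by
        rw [← div_eq_mul_inv, div_le_one h1x]
        have : ‖x‖ ≤ t := hxn.trans (by nlinarith)
        linarith
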